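/- Let a₀ = a be an integer and b coprime to m. Suppose integers {a_n} and residues {s_n} (0 ≤ s_n < m) satisfy s_n·b ≡ a_n (mod m) and a_n = (m+1)·(a_{n−1} − s_{n−1}b)/m for n ≥ 1. Then (m+1)^n · a ≡ ∑_{k=0}^n m^k (m+1)^{n−k} s_k b (mod m^{n+1}) for every n ≥ 1. -/

import Mathlib

theorem rotation_digit_sum (m : ℕ) (hm : 2 ≤ m) (b : ℤ) (hb : IsCoprime b (m : ℤ))
    (a : ℕ → ℤ) (s : ℕ → ℕ) (hs : ∀ n, s n < m)
    (hmod : ∀ n, (s n : ℤ) * b ≡ a n [ZMOD (m : ℤ)])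
    (hrec : ∀ n, 1 ≤ n → (m : ℤ) * a n = ((m : ℤ) + 1) * (a (n - 1) - (s (n - 1) : ℤ) * b)) :
    ∀ n : ℕ, 1 ≤ n →
      ((m : ℤ) + 1) ^ n * a 0 ≡
        ∑ k ∈ Finset.range (n + 1), (m : ℤ) ^ k * ((m : ℤ) + 1) ^ (n - k) * (s k : ℤ) * b
      [ZMOD (m : ℤ) ^ (n + 1)] := by
  have key : ∀ n : ℕ, (m : ℤ) ^ n * a n =
      ((m : ℤ) + 1) ^ n * a 0 -
        ∑ k ∈ Finset.range n, (m : ℤ) ^ k * ((m : ℤ) + 1) ^ (n - k) * (s k : ℤ) * b := by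
    intro n
    induction n with
    | zero => simp
    | succ n ih =>
      have h1 : (m : ℤ) * a (n + 1) = ((m : ℤ) + 1) * (a n - (s n : ℤ) * b) := by
        simpa using hrec (n + 1) (Nat.le_add_left 1 n)
      have h2 : (m : ℤ) ^ (n + 1) * a (n + 1) = (m : ℤ) ^ n * ((m : ℤ) * a (n + 1)) := by
        ring
      rw [h2, h1]
      rw [Finset.sum_range_succ]
      have h3 : ∑ k ∈ Finset.range n, (m : ℤ) ^ k * ((m : ℤ) + 1) ^ (n + 1 - k) * (s k : ℤ) * b
          = ((m : ℤ) + 1) * ∑ k ∈ Finset.range n, (m : ℤ) ^ k * ((m : ℤ) + 1) ^ (n - k) * (s k : ℤ) * b := by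
        rw [Finset.mul_sum]
        refine Finset.sum_congr rfl fun k hk => ?_
        have hk' : k ≤ n := le_of_lt (Finset.mem_range.mp hk)
        have : n + 1 - k = (n - k) + 1 := by omega
        rw [this, pow_succ]
        ring
      rw [h3]
      have h4 : (m : ℤ) ^ n * (((m : ℤ) + 1) * (a n - (s n : ℤ) * b))
          = ((m : ℤ) + 1) * ((m : ℤ) ^ n * a n) - (m : ℤ) ^ n * ((m : ℤ) + 1) * (s n : ℤ) * b := by
        ring
      rw [h4, ih]
      simp [Nat.sub_self]
      ring
  intro n _
  have hdvd : (m : ℤ) ∣ a n - (s n : ℤ) * b := (hmod n).dvd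
  have hk := key n
  rw [Int.modEq_iff_dvd, Finset.sum_range_succ, Nat.sub_self]
  obtain ⟨c, hc⟩ := hdvd
  exact ⟨-c, by linear_combination hk - (m : ℤ) ^ n * hc⟩
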